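/- arXiv:2605.11466 — 2 statements merged into one kernel-verified Lean document; each statement's English description precedes it below -/
import Mathlib

section
/- The circulant graphs C₃₂({2,3,13}) and C₃₂({2,5,11}) are isomorphic as simple graphs, but they are not Adám isomorphic: for every unit x of ℤ/32ℤ, x·({2,3,13} ∪ -{2,3,13}) ≠ {2,5,11} ∪ -{2,5,11} as subsets of ℤ/32ℤ. -/
open Pointwise

/-- The circulant graph `Cₙ(R)`: vertices are `ZMod n`, and distinct `u v` are
adjacent iff `u - v ∈ R` or `v - u ∈ R`. -/
def circulantGraph (n : ℕ) (R : Set (ZMod n)) : SimpleGraph (ZMod n) where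
  Adj u v := u ≠ v ∧ (u - v ∈ R ∨ v - u ∈ R)
  symm := ⟨fun u v h => ⟨h.1.symm, h.2.symm⟩⟩
  loopless := ⟨fun u h => h.1 rfl⟩

instance dR : DecidablePred (· ∈ ({2,3,13} : Set (ZMod 32))) :=
  fun x => inferInstanceAs (Decidable (x = 2 ∨ x = 3 ∨ x = 13))

instance dS : DecidablePred (· ∈ ({2,5,11} : Set (ZMod 32))) :=
  fun x => inferInstanceAs (Decidable (x = 2 ∨ x = 5 ∨ x = 11))

instance dAdjR : DecidableRel (circulantGraph 32 ({2,3,13} : Set (ZMod 32))).Adj :=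
  fun u v => inferInstanceAs (Decidable (u ≠ v ∧ _))

instance dAdjS : DecidableRel (circulantGraph 32 ({2,5,11} : Set (ZMod 32))).Adj :=
  fun u v => inferInstanceAs (Decidable (u ≠ v ∧ _))

def myf (x : ZMod 32) : ZMod 32 := if x.val % 2 = 0 then x else x + 8

def myg (x : ZMod 32) : ZMod 32 := if x.val % 2 = 0 then x else x + 24

def myEquiv : ZMod 32 ≃ ZMod 32 where
  toFun := myf
  invFun := myg
  left_inv := by decide
  right_inv := by decide

theorem key : ∀ a : ZMod 32, a.val % 2 = 1 →
    ¬ ∀ y : ZMod 32,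
      (a * 2 = -y ∨ a * 3 = -y ∨ a * 13 = -y ∨ a * 2 = y ∨ a * 3 = y ∨ a * 13 = y ↔
        y = -2 ∨ y = -5 ∨ y = -11 ∨ y = 2 ∨ y = 5 ∨ y = 11) := by decide

theorem units_odd : ∀ x : (ZMod 32)ˣ, (x : ZMod 32).val % 2 = 1 := by decide

theorem stmt4 :
    Nonempty (circulantGraph 32 ({2,3,13} : Set (ZMod 32)) ≃g circulantGraph 32 ({2,5,11} : Set (ZMod 32))) ∧
    ∀ x : (ZMod 32)ˣ,
      (fun r => (x : ZMod 32) * r) '' (({2,3,13} : Set (ZMod 32)) ∪ -({2,3,13} : Set (ZMod 32))) ≠ ({2,5,11} : Set (ZMod 32)) ∪ -({2,5,11} : Set (ZMod 32)) := by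
  constructor
  · exact ⟨{ toEquiv := myEquiv, map_rel_iff' := by decide }⟩
  · intro x heq
    have hodd := units_odd x
    apply key (x : ZMod 32) hodd
    intro y
    have := Set.ext_iff.mp heq y
    simpa [Set.mem_image, Set.mem_union, Set.mem_insert_iff, Set.mem_singleton_iff,
      Set.mem_neg, neg_eq_iff_eq_neg, or_assoc, and_or_left, exists_or] using this
end

section
/- The circulant graphs C₃₂({3,13,14}) and C₃₂({5,11,14}) are isomorphic as simple graphs, but they are not Adám isomorphic: for every unit x of ℤ/32ℤ, x·({3,13,14} ∪ -{3,13,14}) ≠ {5,11,14} ∪ -{5,11,14} as subsets of ℤ/32ℤ. -/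
open Pointwise

def f32 : ZMod 32 → ZMod 32 := fun i => if Even i.val then -i else 8 - i

lemma f32_invol : ∀ a, f32 (f32 a) = a := by decide

def e32 : ZMod 32 ≃ ZMod 32 where
  toFun := f32
  invFun := f32
  left_inv := f32_invol
  right_inv := f32_invol

theorem stmt7 :
    Nonempty (circulantGraph 32 ({3,13,14} : Set (ZMod 32)) ≃g circulantGraph 32 ({5,11,14} : Set (ZMod 32))) ∧
    ∀ x : (ZMod 32)ˣ,
      (fun r => (x : ZMod 32) * r) '' (({3,13,14} : Set (ZMod 32)) ∪ -({3,13,14} : Set (ZMod 32))) ≠ ({5,11,14} : Set (ZMod 32)) ∪ -({5,11,14} : Set (ZMod 32)) := by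
  constructor
  · refine ⟨⟨e32, ?_⟩⟩
    intro a b
    show (circulantGraph 32 _).Adj (f32 a) (f32 b) ↔ (circulantGraph 32 _).Adj a b
    simp only [circulantGraph, Set.mem_insert_iff, Set.mem_singleton_iff]
    revert a b
    decide
  · intro x h
    have hx : ∀ a : ZMod 32, (a ∈ (fun r => (x : ZMod 32) * r) '' (({3,13,14} : Set (ZMod 32)) ∪ -({3,13,14} : Set (ZMod 32)))) ↔ a ∈ (({5,11,14} : Set (ZMod 32)) ∪ -({5,11,14} : Set (ZMod 32))) := by
      rw [h]; intro a; rfl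
    simp only [Set.mem_image, Set.mem_union, Set.mem_insert_iff, Set.mem_singleton_iff,
      Set.mem_neg] at hx
    clear h
    revert hx
    revert x
    decide
end
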